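/- Let p, s ∈ ℝ^n and q, t ∈ ℝ^m be vectors with nonnegative entries such that p ≺ s and q ≺ t. Then the Kronecker (direct) product p ⊗ q ∈ ℝ^{nm}, with entries (p ⊗ q)_{(i,j)} = p_i q_j, satisfies p ⊗ q ≺ s ⊗ t. -/

import Mathlib

open scoped BigOperators ComplexOrder

/-- The descending rearrangement `v↓` of a vector `v ∈ ℝⁿ`. -/
noncomputable def descSort {n : ℕ} (v : Fin n → ℝ) : Fin n → ℝ :=
  fun i => v (Tuple.sort v i.rev)

/-- The sum of the `k` largest entries of `v`. -/
noncomputable def sumTop {n : ℕ} (v : Fin n → ℝ) (k : ℕ) : ℝ :=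
  ∑ i ∈ Finset.univ.filter (fun i : Fin n => (i : ℕ) < k), descSort v i

/-- Majorization `v ≺ w`: for every `k`, the sum of the `k` largest entries of `v` is at
most that of `w`, and the total sums agree. -/
noncomputable def Majorizes {n : ℕ} (v w : Fin n → ℝ) : Prop :=
  (∀ k : ℕ, sumTop v k ≤ sumTop w k) ∧ (∑ i, v i = ∑ i, w i)

/-- Weak majorization `v ≺_w w`: only the partial-sum inequalities are required. -/
noncomputable def WeakMajorizes {n : ℕ} (v w : Fin n → ℝ) : Prop :=
  ∀ k : ℕ, sumTop v k ≤ sumTop w k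

-- equiv realizing descSort
noncomputable def esort {n : ℕ} (v : Fin n → ℝ) : Fin n ≃ Fin n :=
  Fin.revPerm.trans (Tuple.sort v)

lemma descSort_eq {n : ℕ} (v : Fin n → ℝ) (i : Fin n) :
    descSort v i = v (esort v i) := rfl

lemma descSort_antitone {n : ℕ} (v : Fin n → ℝ) : Antitone (descSort v) := by
  intro i j hij
  have := Tuple.monotone_sort v (Fin.rev_le_rev.mpr hij)
  simpa [descSort] using this

lemma descSort_nonneg {n : ℕ} {v : Fin n → ℝ} (hv : ∀ i, 0 ≤ v i) (i : Fin n) :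
    0 ≤ descSort v i := hv _

lemma filter_lt_card {n k : ℕ} :
    (Finset.univ.filter (fun i : Fin n => (i : ℕ) < k)).card = min k n := by
  rcases le_or_gt n k with h | h
  · have : (Finset.univ.filter (fun i : Fin n => (i : ℕ) < k)) = Finset.univ := by
      ext i; simp [lt_of_lt_of_le i.2 h]
    rw [this]
    simp [Finset.card_univ, Nat.min_eq_right h]
  · have : (Finset.univ.filter (fun i : Fin n => (i : ℕ) < k)) = Finset.Iio ⟨k, h⟩ := by
      ext i; simp [Fin.lt_def]
    rw [this, Fin.card_Iio]
    simp [Nat.min_eq_left h.le]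

lemma sumTop_min {n : ℕ} (v : Fin n → ℝ) (k : ℕ) :
    sumTop v k = sumTop v (min k n) := by
  unfold sumTop
  congr 1
  ext i
  simp only [Finset.mem_filter, Finset.mem_univ, true_and, lt_min_iff]
  exact ⟨fun h => ⟨h, i.2⟩, fun h => h.1⟩

lemma sumTop_mono {n : ℕ} {v : Fin n → ℝ} (hv : ∀ i, 0 ≤ v i) :
    Monotone (sumTop v) := by
  intro k l hkl
  apply Finset.sum_le_sum_of_subset_of_nonneg
  · intro i; simp only [Finset.mem_filter, Finset.mem_univ, true_and]
    exact fun h => lt_of_lt_of_le h hkl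
  · exact fun i _ _ => descSort_nonneg hv i

lemma strictMono_nat_le {k : ℕ} {g : Fin k → ℕ} (hg : StrictMono g) (j : Fin k) :
    (j : ℕ) ≤ g j := by
  suffices h : ∀ r : ℕ, ∀ j : Fin k, (j : ℕ) = r → r ≤ g j by exact h j j rfl
  intro r
  induction r with
  | zero => intro j _; exact Nat.zero_le _
  | succ r ih =>
      intro j hj
      have hrk : r < k := by omega
      have h1 : (⟨r, hrk⟩ : Fin k) < j := by simp [Fin.lt_def, hj]
      have h2 := ih ⟨r, hrk⟩ rfl
      have h3 := hg h1
      omega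

lemma sum_le_sumTop {n : ℕ} (v : Fin n → ℝ) (A : Finset (Fin n)) :
    ∑ i ∈ A, v i ≤ sumTop v A.card := by
  classical
  set e := esort v
  set S : Finset (Fin n) := A.image e.symm with hS
  have hScard : S.card = A.card := Finset.card_image_of_injective _ e.symm.injective
  have hsum : ∑ i ∈ A, v i = ∑ j ∈ S, descSort v j := by
    rw [hS, Finset.sum_image (fun a _ b _ h => e.symm.injective h)]
    refine Finset.sum_congr rfl fun i _ => ?_
    rw [descSort_eq, Equiv.apply_symm_apply]
  rw [hsum, ← hScard]
  have hc : S.card ≤ n := by simpa using Finset.card_le_univ S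
  have hfil : (Finset.univ.filter (fun i : Fin n => (i : ℕ) < S.card))
      = Finset.univ.image (fun j : Fin S.card => Fin.castLE hc j) := by
    ext i
    simp only [Finset.mem_filter, Finset.mem_univ, true_and, Finset.mem_image]
    constructor
    · intro h; exact ⟨⟨i, h⟩, Fin.ext rfl⟩
    · rintro ⟨j, rfl⟩; exact j.2
  have hSim : S = Finset.univ.image (fun j => S.orderEmbOfFin rfl j) := by
    ext i
    simp only [Finset.mem_image, Finset.mem_univ, true_and]
    constructor
    · intro hi
      have : i ∈ Set.range (S.orderEmbOfFin rfl) := by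
        rw [Finset.range_orderEmbOfFin]; exact hi
      obtain ⟨j, hj⟩ := this; exact ⟨j, hj⟩
    · rintro ⟨j, rfl⟩; exact Finset.orderEmbOfFin_mem S rfl j
  conv_lhs => rw [hSim]
  rw [Finset.sum_image (fun a _ b _ h => (S.orderEmbOfFin rfl).injective h)]
  unfold sumTop
  rw [hfil, Finset.sum_image (fun a _ b _ h => Fin.castLE_injective hc h)]
  apply Finset.sum_le_sum
  intro j _
  apply descSort_antitone
  have := strictMono_nat_le (g := fun j : Fin S.card => ((S.orderEmbOfFin rfl j : Fin n) : ℕ))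
    (fun a b hab => by exact_mod_cast (S.orderEmbOfFin rfl).strictMono hab) j
  exact Fin.le_def.mpr (by simpa using this)

lemma sumTop_eq_sum {n : ℕ} (v : Fin n → ℝ) (k : ℕ) :
    ∃ A : Finset (Fin n), A.card = min k n ∧ sumTop v k = ∑ i ∈ A, v i := by
  classical
  refine ⟨(Finset.univ.filter (fun i : Fin n => (i : ℕ) < k)).image (esort v), ?_, ?_⟩
  · rw [Finset.card_image_of_injective _ (esort v).injective, filter_lt_card]
  · rw [Finset.sum_image (fun a _ b _ h => (esort v).injective h)]
    rfl

lemma sumTop_total {n : ℕ} (v : Fin n → ℝ) : sumTop v n = ∑ i, v i := by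
  unfold sumTop
  have : (Finset.univ.filter (fun i : Fin n => (i : ℕ) < n)) = Finset.univ := by
    ext i; simp [i.2]
  rw [this]
  exact Equiv.sum_comp (esort v) v

lemma oneFactor {n m : ℕ} (a : Fin n → ℝ) (ha : ∀ i, 0 ≤ a i)
    (u u' : Fin m → ℝ)
    (hw : ∀ k, sumTop u k ≤ sumTop u' k) (A : Finset (Fin n × Fin m)) :
    ∃ B : Finset (Fin n × Fin m), B.card ≤ A.card ∧
      ∑ x ∈ A, a x.1 * u x.2 ≤ ∑ x ∈ B, a x.1 * u' x.2 := by
  classical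
  -- fibers of A over the first coordinate
  set Af : Fin n → Finset (Fin m) :=
    fun i => (A.filter (fun x => x.1 = i)).image Prod.snd with hAf
  have hAfcard : ∀ i, (Af i).card = (A.filter (fun x => x.1 = i)).card := by
    intro i
    apply Finset.card_image_of_injOn
    intro x hx y hy hxy
    simp only [Finset.mem_coe, Finset.mem_filter] at hx hy
    exact Prod.ext (hx.2.trans hy.2.symm) hxy
  have hAcard : A.card = ∑ i, (Af i).card := by
    rw [Finset.card_eq_sum_card_fiberwise (f := Prod.fst) (t := Finset.univ)
      (fun x _ => Finset.mem_univ _)]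
    exact Finset.sum_congr rfl fun i _ => (hAfcard i).symm
  have hAsum : ∑ x ∈ A, a x.1 * u x.2 = ∑ i, a i * ∑ j ∈ Af i, u j := by
    have h0 := Finset.sum_fiberwise_of_maps_to
      (fun x (_ : x ∈ A) => Finset.mem_univ x.1) (fun x => a x.1 * u x.2)
    rw [← h0]
    refine Finset.sum_congr rfl fun i _ => ?_
    rw [Finset.mul_sum, hAf]
    rw [Finset.sum_image ?_]
    · refine Finset.sum_congr rfl fun x hx => ?_
      simp only [Finset.mem_filter] at hx
      rw [hx.2]
    · intro x hx y hy hxy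
      simp only [Finset.mem_coe, Finset.mem_filter] at hx hy
      exact Prod.ext (hx.2.trans hy.2.symm) hxy
  -- choose optimal sets for u'
  have hex : ∀ i : Fin n, ∃ Bi : Finset (Fin m),
      Bi.card = min (Af i).card m ∧ sumTop u' (Af i).card = ∑ j ∈ Bi, u' j :=
    fun i => sumTop_eq_sum u' ((Af i).card)
  choose Bf hBfcard hBfsum using hex
  refine ⟨Finset.univ.biUnion (fun i => {i} ×ˢ Bf i), ?_, ?_⟩
  · have hdisj : ∀ i ∈ Finset.univ, ∀ j ∈ Finset.univ, i ≠ j →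
        Disjoint (({i} : Finset (Fin n)) ×ˢ Bf i) ({j} ×ˢ Bf j) := by
      intro i _ j _ hij
      simp only [Finset.disjoint_left]
      intro x hx hy
      simp only [Finset.mem_product, Finset.mem_singleton] at hx hy
      exact hij (hx.1 ▸ hy.1 ▸ rfl)
    rw [Finset.card_biUnion hdisj, hAcard]
    apply Finset.sum_le_sum
    intro i _
    rw [Finset.card_product, Finset.card_singleton, one_mul, hBfcard]
    exact Nat.min_le_left _ _
  · rw [hAsum, Finset.sum_biUnion ?disj]
    case disj =>
      intro i _ j _ hij
      simp only [Finset.disjoint_left]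
      intro x hx hy
      simp only [Finset.mem_product, Finset.mem_singleton] at hx hy
      exact hij (hx.1 ▸ hy.1 ▸ rfl)
    apply Finset.sum_le_sum
    intro i _
    rw [Finset.sum_product, Finset.sum_singleton]
    calc a i * ∑ j ∈ Af i, u j
        ≤ a i * ∑ j ∈ Bf i, u' j :=
          mul_le_mul_of_nonneg_left
            (le_trans (sum_le_sumTop u (Af i)) ((hw _).trans_eq (hBfsum i))) (ha i)
      _ = ∑ y ∈ Bf i, a (i, y).1 * u' (i, y).2 := by rw [Finset.mul_sum]

/-- The Kronecker (direct) product of two vectors: `(p ⊗ q)_{(i,j)} = p_i q_j`,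
realized on `Fin (n * m)` via the standard equivalence `Fin n × Fin m ≃ Fin (n * m)`. -/
def kron {n m : ℕ} (p : Fin n → ℝ) (q : Fin m → ℝ) : Fin (n * m) → ℝ :=
  fun k => p (finProdFinEquiv.symm k).1 * q (finProdFinEquiv.symm k).2

lemma sum_kron_eq {n m : ℕ} (p : Fin n → ℝ) (q : Fin m → ℝ) :
    ∑ z, kron p q z = (∑ i, p i) * (∑ j, q j) := by
  rw [← Equiv.sum_comp finProdFinEquiv (kron p q), Finset.sum_mul_sum,
    Fintype.sum_prod_type]
  refine Finset.sum_congr rfl fun i _ => Finset.sum_congr rfl fun j _ => ?_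
  simp [kron]

lemma kron_sum_image {n m : ℕ} (s : Fin n → ℝ) (t : Fin m → ℝ)
    (C : Finset (Fin n × Fin m)) :
    ∑ x ∈ C, s x.1 * t x.2 = ∑ z ∈ C.image finProdFinEquiv, kron s t z := by
  rw [Finset.sum_image (fun a _ b _ h => finProdFinEquiv.injective h)]
  refine Finset.sum_congr rfl fun x _ => ?_
  simp [kron]


theorem majorizes_kron' {n m : ℕ} (p s : Fin n → ℝ) (q t : Fin m → ℝ)
    (hp : ∀ i, 0 ≤ p i) (hs : ∀ i, 0 ≤ s i) (hq : ∀ j, 0 ≤ q j) (ht : ∀ j, 0 ≤ t j)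
    (h1 : (∀ k : ℕ, sumTop p k ≤ sumTop s k) ∧ (∑ i, p i = ∑ i, s i))
    (h2 : (∀ k : ℕ, sumTop q k ≤ sumTop t k) ∧ (∑ i, q i = ∑ i, t i)) :
    (∀ k : ℕ, sumTop (kron p q) k ≤ sumTop (kron s t) k) ∧
      (∑ i, kron p q i = ∑ i, kron s t i) := by
  classical
  constructor
  · intro k
    obtain ⟨D, hDcard, hDsum⟩ := sumTop_eq_sum (kron p q) k
    set A : Finset (Fin n × Fin m) := D.image finProdFinEquiv.symm with hA
    have hAcard : A.card = min k (n * m) := by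
      rw [hA, Finset.card_image_of_injective _ finProdFinEquiv.symm.injective, hDcard]
    have step0 : sumTop (kron p q) k = ∑ x ∈ A, p x.1 * q x.2 := by
      rw [hDsum, hA, Finset.sum_image (fun a _ b _ h => finProdFinEquiv.symm.injective h)]
      rfl
    set A1 : Finset (Fin m × Fin n) := A.image Prod.swap with hA1
    have hA1card : A1.card = A.card :=
      Finset.card_image_of_injective _ Prod.swap_injective
    have step1 : ∑ x ∈ A, p x.1 * q x.2 = ∑ y ∈ A1, q y.1 * p y.2 := by
      rw [hA1, Finset.sum_image (fun a _ b _ h => Prod.swap_injective h)]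
      exact Finset.sum_congr rfl fun x _ => (mul_comm _ _)
    obtain ⟨B1, hB1card, hB1⟩ := oneFactor q hq p s h1.1 A1
    set B : Finset (Fin n × Fin m) := B1.image Prod.swap with hB
    have hBcard : B.card = B1.card :=
      Finset.card_image_of_injective _ Prod.swap_injective
    have step2 : ∑ y ∈ B1, q y.1 * s y.2 = ∑ x ∈ B, s x.1 * q x.2 := by
      rw [hB, Finset.sum_image (fun a _ b _ h => Prod.swap_injective h)]
      exact Finset.sum_congr rfl fun x _ => (mul_comm _ _)
    obtain ⟨C, hCcard, hC⟩ := oneFactor s hs q t h2.1 B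
    have hkst : ∀ z, 0 ≤ kron s t z := fun z => mul_nonneg (hs _) (ht _)
    have hfin : ∑ x ∈ C, s x.1 * t x.2 ≤ sumTop (kron s t) k := by
      rw [kron_sum_image]
      refine le_trans (sum_le_sumTop (kron s t) _) (sumTop_mono hkst ?_)
      have : (C.image finProdFinEquiv).card ≤ min k (n * m) := by
        rw [Finset.card_image_of_injective _ finProdFinEquiv.injective]
        omega
      exact le_trans this (Nat.min_le_left _ _)
    calc sumTop (kron p q) k = ∑ y ∈ A1, q y.1 * p y.2 := by rw [step0, step1]
      _ ≤ ∑ y ∈ B1, q y.1 * s y.2 := hB1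
      _ = ∑ x ∈ B, s x.1 * q x.2 := step2
      _ ≤ ∑ x ∈ C, s x.1 * t x.2 := hC
      _ ≤ sumTop (kron s t) k := hfin
  · rw [sum_kron_eq, sum_kron_eq, h1.2, h2.2]

/-- If `p ≺ s` (in `ℝⁿ`) and `q ≺ t` (in `ℝᵐ`), all vectors having
nonnegative entries, then the Kronecker product satisfies `p ⊗ q ≺ s ⊗ t`. -/
theorem majorizes_kron {n m : ℕ} (p s : Fin n → ℝ) (q t : Fin m → ℝ)
    (hp : ∀ i, 0 ≤ p i) (hs : ∀ i, 0 ≤ s i) (hq : ∀ j, 0 ≤ q j) (ht : ∀ j, 0 ≤ t j)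
    (h1 : Majorizes p s) (h2 : Majorizes q t) :
    Majorizes (kron p q) (kron s t) := by
  exact majorizes_kron' p s q t hp hs hq ht h1 h2
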